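/- Let R be a commutative semiring, S a multiplicative subset of R, and P an S-prime ideal of R. If A₁, …, Aₙ are finitely many S-primary k-ideals of R, each disjoint from S and each satisfying √Aᵢ = P, then their intersection A = A₁ ∩ ⋯ ∩ Aₙ is an S-primary k-ideal of R, is disjoint from S, and satisfies √A = P. -/
import Mathlib


/-- The finite intersection of S-k-P-primary ideals is an S-k-P-primary ideal. -/
theorem finite_inter_S_P_primary {R : Type*} [CommSemiring R] (S : Set R)
    (hS1 : (1 : R) ∈ S) (hSmul : ∀ s ∈ S, ∀ t ∈ S, s * t ∈ S)
    (P : Ideal R) (hPS : Disjoint S (P : Set R))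
    (hPprime : ∃ s ∈ S, ∀ a b : R, a * b ∈ P → s * a ∈ P ∨ s * b ∈ P)
    (n : ℕ) (hn : 0 < n) (A : Fin n → Ideal R)
    (hAS : ∀ i, Disjoint S ((A i : Set R)))
    (hAk : ∀ i, ∀ a b : R, a + b ∈ A i → a ∈ A i → b ∈ A i)
    (hAprim : ∀ i, ∃ s ∈ S, ∀ a b : R,
      a * b ∈ A i → s * a ∈ A i ∨ s * b ∈ (A i).radical)
    (hArad : ∀ i, (A i).radical = P) :
    Disjoint S (((⨅ i, A i : Ideal R) : Set R)) ∧
    (∀ a b : R, a + b ∈ (⨅ i, A i : Ideal R) → a ∈ (⨅ i, A i : Ideal R) →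
      b ∈ (⨅ i, A i : Ideal R)) ∧
    (∃ s ∈ S, ∀ a b : R, a * b ∈ (⨅ i, A i : Ideal R) →
      s * a ∈ (⨅ i, A i : Ideal R) ∨ s * b ∈ (⨅ i, A i : Ideal R).radical) ∧
    (⨅ i, A i : Ideal R).radical = P := by
  have i0 : Fin n := ⟨0, hn⟩
  -- radical equality
  have hrad : (⨅ i, A i : Ideal R).radical = P := by
    apply le_antisymm
    · calc (⨅ i, A i : Ideal R).radical ≤ (A i0).radical :=
            Ideal.radical_mono (iInf_le A i0)
        _ = P := hArad i0
    · intro x hx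
      have hx' : ∀ i, ∃ m : ℕ, x ^ m ∈ A i := by
        intro i
        have : x ∈ (A i).radical := by rw [hArad i]; exact hx
        exact this
      choose f hf using hx'
      refine ⟨∑ i, f i, ?_⟩
      rw [Ideal.mem_iInf]
      intro i
      have : x ^ (∑ j, f j) = (∏ j ∈ Finset.univ.erase i, x ^ f j) * x ^ f i := by
        rw [← Finset.prod_pow_eq_pow_sum,
          ← Finset.prod_erase_mul Finset.univ (fun j => x ^ f j) (Finset.mem_univ i)]
      rw [this]
      exact Ideal.mul_mem_left _ _ (hf i)
  refine ⟨?_, ?_, ?_, hrad⟩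
  · exact (hAS i0).mono_right (fun x hx => Ideal.mem_iInf.mp hx i0)
  · intro a b hab ha
    rw [Ideal.mem_iInf] at *
    exact fun i => hAk i a b (hab i) (ha i)
  · choose s hsS hs using hAprim
    refine ⟨∏ i, s i, ?_, ?_⟩
    · exact Finset.prod_induction s (· ∈ S) (fun a b ha hb => hSmul a ha b hb) hS1
        (fun i _ => hsS i)
    · intro a b hab
      by_cases h : ∃ i, s i * b ∈ (A i).radical
      · right
        obtain ⟨i, hi⟩ := h
        rw [hrad]
        have hi' : s i * b ∈ P := by rw [← hArad i]; exact hi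
        have : (∏ j, s j) * b = (∏ j ∈ Finset.univ.erase i, s j) * (s i * b) := by
          rw [← mul_assoc, Finset.prod_erase_mul Finset.univ s (Finset.mem_univ i)]
        rw [this]
        exact Ideal.mul_mem_left _ _ hi'
      · left
        push_neg at h
        rw [Ideal.mem_iInf]
        intro i
        have hi : s i * a ∈ A i :=
          ((hs i a b (Ideal.mem_iInf.mp hab i)).resolve_right (h i))
        have : (∏ j, s j) * a = (∏ j ∈ Finset.univ.erase i, s j) * (s i * a) := by
          rw [← mul_assoc, Finset.prod_erase_mul Finset.univ s (Finset.mem_univ i)]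
        rw [this]
        exact Ideal.mul_mem_left _ _ hi
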